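/- Let R be a commutative ring, n ≥ 1 an integer, and f, g ∈ R[X] of degree < n. Set k = ⌈n/2⌉, f₀ = f mod X^k, f₁ = f quo X^k, f₀⁻ = f mod X^{⌊n/2⌋}, and similarly g₀, g₁, g₀⁻ for g. Then the low short product of f and g decomposes as: (f·g) mod X^n = ( f₀·g₀ + X^k·( ((f₀⁻·g₁) mod X^{⌊n/2⌋}) + ((f₁·g₀⁻) mod X^{⌊n/2⌋}) ) ) mod X^n. -/

import Mathlib

open Polynomial

private lemma mod_eq_of_dvd_sub' {R : Type*} [CommRing R] {q a b : R[X]} (hq : q.Monic)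
    (h : q ∣ a - b) : a %ₘ q = b %ₘ q := by
  have h0 : (a - b) %ₘ q = 0 := (Polynomial.modByMonic_eq_zero_iff_dvd hq).2 h
  rw [Polynomial.sub_modByMonic] at h0
  exact sub_eq_zero.mp h0

private lemma split_aux {R : Type*} [CommRing R] (m k : ℕ) (hmk : m ≤ k)
    (f0 f1 fm g0 g1 gm P Q : R[X])
    (h1 : (X : R[X]) ^ m ∣ f0 - fm) (h2 : (X : R[X]) ^ m ∣ fm * g1 - P)
    (h3 : (X : R[X]) ^ m ∣ g0 - gm) (h4 : (X : R[X]) ^ m ∣ f1 * gm - Q) :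
    (X : R[X]) ^ (m + k) ∣
      (f0 + X ^ k * f1) * (g0 + X ^ k * g1) - (f0 * g0 + X ^ k * (P + Q)) := by
  have e : (f0 + X ^ k * f1) * (g0 + X ^ k * g1) - (f0 * g0 + X ^ k * (P + Q))
      = X ^ k * (((f0 - fm) * g1 + (fm * g1 - P)) + (f1 * (g0 - gm) + (f1 * gm - Q)))
        + X ^ (k - m) * X ^ m * (X ^ k * (f1 * g1)) := by
    rw [← pow_add]
    have hk : k - m + m = k := by omega
    rw [hk]; ring
  rw [e, pow_add]
  refine dvd_add ?_ ?_
  · rw [mul_comm ((X : R[X]) ^ m)]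
    exact mul_dvd_mul_left _
      (dvd_add (dvd_add (h1.mul_right _) h2) (dvd_add (h3.mul_left _) h4))
  · exact ⟨X ^ (k - m) * (f1 * g1), by ring⟩

/-- For a commutative ring `R`, `n ≥ 1`, and `f g : R[X]` of degree `< n`,
with `k = ⌈n/2⌉`, `f₀ = f mod X^k`, `f₁ = f quo X^k`, `f₀⁻ = f mod X^{⌊n/2⌋}` (and
similarly for `g`), the low short product decomposes as
`(f·g) mod X^n = (f₀·g₀ + X^k·((f₀⁻·g₁ mod X^{⌊n/2⌋}) + (f₁·g₀⁻ mod X^{⌊n/2⌋}))) mod X^n`. -/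
theorem low_short_product_split
    {R : Type*} [CommRing R] (n : ℕ) (hn : 1 ≤ n)
    (f g : R[X]) (hf : f.degree < n) (hg : g.degree < n) :
    (f * g) %ₘ X ^ n =
      ((f %ₘ X ^ ((n + 1) / 2)) * (g %ₘ X ^ ((n + 1) / 2))
        + X ^ ((n + 1) / 2) *
          (((f %ₘ X ^ (n / 2)) * (g /ₘ X ^ ((n + 1) / 2))) %ₘ X ^ (n / 2)
            + ((f /ₘ X ^ ((n + 1) / 2)) * (g %ₘ X ^ (n / 2))) %ₘ X ^ (n / 2))) %ₘ X ^ n := by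
  set k := (n + 1) / 2 with hk
  set m := n / 2 with hm
  have hmk : m ≤ k := by omega
  have hmkn : m + k = n := by omega
  have hXk : ((X : R[X]) ^ k).Monic := monic_X_pow k
  have hXm : ((X : R[X]) ^ m).Monic := monic_X_pow m
  have ef := modByMonic_add_div f (X ^ k)
  have eg := modByMonic_add_div g (X ^ k)
  apply mod_eq_of_dvd_sub' (monic_X_pow n)
  have h1 : (X : R[X]) ^ m ∣ f %ₘ X ^ k - f %ₘ X ^ m := by
    have e : f %ₘ X ^ k - f %ₘ X ^ m
        = X ^ m * (f /ₘ X ^ m) - X ^ k * (f /ₘ X ^ k) := by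
      linear_combination ef - modByMonic_add_div f (X ^ m)
    rw [e]
    exact dvd_sub (Dvd.intro _ rfl) ((pow_dvd_pow X hmk).mul_right _)
  have h3 : (X : R[X]) ^ m ∣ g %ₘ X ^ k - g %ₘ X ^ m := by
    have e : g %ₘ X ^ k - g %ₘ X ^ m
        = X ^ m * (g /ₘ X ^ m) - X ^ k * (g /ₘ X ^ k) := by
      linear_combination eg - modByMonic_add_div g (X ^ m)
    rw [e]
    exact dvd_sub (Dvd.intro _ rfl) ((pow_dvd_pow X hmk).mul_right _)
  have h2 : (X : R[X]) ^ m ∣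
      (f %ₘ X ^ m) * (g /ₘ X ^ k) - ((f %ₘ X ^ m) * (g /ₘ X ^ k)) %ₘ X ^ m := by
    have e := modByMonic_add_div ((f %ₘ X ^ m) * (g /ₘ X ^ k)) (X ^ m)
    exact ⟨(f %ₘ X ^ m) * (g /ₘ X ^ k) /ₘ X ^ m, by linear_combination -e⟩
  have h4 : (X : R[X]) ^ m ∣
      (f /ₘ X ^ k) * (g %ₘ X ^ m) - ((f /ₘ X ^ k) * (g %ₘ X ^ m)) %ₘ X ^ m := by
    have e := modByMonic_add_div ((f /ₘ X ^ k) * (g %ₘ X ^ m)) (X ^ m)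
    exact ⟨(f /ₘ X ^ k) * (g %ₘ X ^ m) /ₘ X ^ m, by linear_combination -e⟩
  have key := split_aux m k hmk (f %ₘ X ^ k) (f /ₘ X ^ k) (f %ₘ X ^ m)
    (g %ₘ X ^ k) (g /ₘ X ^ k) (g %ₘ X ^ m)
    (((f %ₘ X ^ m) * (g /ₘ X ^ k)) %ₘ X ^ m)
    (((f /ₘ X ^ k) * (g %ₘ X ^ m)) %ₘ X ^ m) h1 h2 h3 h4
  rwa [ef, eg, hmkn] at key
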